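/- Let c = c(x) > 0 be defined for large x by the saddle point equation (e^c − 1 − 3c)/(2c²) = x. Then as x → ∞, c = log x + 2 log log x + log 2 + o(1). -/

import Mathlib

open Filter Real

lemma aux_one_le_stmt15 (x t : ℝ) (hx : 0 < x) (ht : 0 < t)
    (heq : (Real.exp t - 1 - 3 * t) / (2 * t ^ 2) = x) : 1 ≤ t := by
  by_contra h
  push_neg at h
  have hnum : Real.exp t - 1 - 3 * t = x * (2 * t ^ 2) :=
    (div_eq_iff (by positivity)).1 heq
  have hconv := convexOn_exp.2 (Set.mem_univ (0:ℝ)) (Set.mem_univ (1:ℝ))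
    (by linarith : (0:ℝ) ≤ 1 - t) ht.le (by ring)
  simp only [smul_eq_mul, mul_zero, mul_one, Real.exp_zero] at hconv
  -- hconv : exp ((1-t)*0 + t*1) ≤ (1-t)*1 + t * exp 1
  have he : Real.exp 1 < 2.7182818286 := Real.exp_one_lt_d9
  have h0 : Real.exp t ≤ (1 - t) + t * Real.exp 1 := by
    simpa using hconv
  nlinarith [mul_pos hx (mul_pos two_pos (pow_pos ht 2)), sq_nonneg t]

/-- If `c(x)` solves the saddle point equation `(e^c - 1 - 3c)/(2c²) = x` for
large `x`, then `c(x) = log x + 2 log log x + log 2 + o(1)` as `x → ∞`. -/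
theorem stmt15 (c : ℝ → ℝ)
    (hc : ∀ᶠ x in atTop, 0 < c x ∧
      (Real.exp (c x) - 1 - 3 * c x) / (2 * (c x) ^ 2) = x) :
    Tendsto (fun x => c x - (Real.log x + 2 * Real.log (Real.log x) + Real.log 2))
      atTop (nhds 0) := by
  set d : ℝ → ℝ := fun x => (1 + 3 * c x) / (2 * x * (c x) ^ 2) with hd_def
  -- Collect pointwise facts on an eventual set.
  have H : ∀ᶠ x in atTop, 0 < c x ∧ 1 ≤ c x ∧ 0 < x ∧ (12:ℝ) ≤ Real.log x ∧
      Real.exp (c x) = 2 * x * (c x) ^ 2 + 1 + 3 * c x ∧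
      0 ≤ d x ∧ d x ≤ 2 / x ∧ d x ≤ 1 ∧
      c x = Real.log 2 + Real.log x + 2 * Real.log (c x) + Real.log (1 + d x) ∧
      2 * Real.log (c x) ≤ Real.log x + 9 ∧
      c x ≤ 3 * Real.log x ∧
      0 ≤ Real.log (c x) ∧
      Real.log (c x) ≤ Real.log 3 + Real.log (Real.log x) := by
    filter_upwards [hc, eventually_ge_atTop (Real.exp 12)] with x hx hxe
    obtain ⟨hcpos, heq⟩ := hx
    have hx0 : (0:ℝ) < x := lt_of_lt_of_le (Real.exp_pos 12) hxe
    have hlx : (12:ℝ) ≤ Real.log x := (Real.le_log_iff_exp_le hx0).2 hxe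
    have hx2 : (2:ℝ) ≤ x := le_trans (by nlinarith [Real.add_one_le_exp (12:ℝ)]) hxe
    have hc1 : 1 ≤ c x := aux_one_le_stmt15 x (c x) hx0 hcpos heq
    have hE : Real.exp (c x) = 2 * x * (c x) ^ 2 + 1 + 3 * c x := by
      have := (div_eq_iff (by positivity : 2 * (c x) ^ 2 ≠ 0)).1 heq
      nlinarith [this]
    have hcsq : (1:ℝ) ≤ (c x) ^ 2 := by nlinarith
    have hxcsq : (0:ℝ) < 2 * x * (c x) ^ 2 := by positivity
    have hd0 : 0 ≤ d x := by
      rw [hd_def]; positivity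
    have hd2 : d x ≤ 2 / x := by
      rw [hd_def]
      rw [div_le_div_iff₀ hxcsq hx0]
      have h41 : (1 + 3 * c x) * x ≤ 4 * c x * x := by nlinarith
      nlinarith
    have hd1 : d x ≤ 1 := le_trans hd2 (by rw [div_le_one hx0]; linarith)
    -- the key identity
    have hprod : 2 * x * (c x) ^ 2 * (1 + d x) = Real.exp (c x) := by
      rw [hd_def]
      field_simp
      nlinarith [hE]
    have h1d : (0:ℝ) < 1 + d x := by linarith
    have h4 : c x = Real.log 2 + Real.log x + 2 * Real.log (c x) + Real.log (1 + d x) := by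
      have : c x = Real.log (2 * x * (c x) ^ 2 * (1 + d x)) := by
        rw [hprod, Real.log_exp]
      rw [Real.log_mul (ne_of_gt hxcsq) (ne_of_gt h1d),
        Real.log_mul (by positivity) (by positivity),
        Real.log_mul (by norm_num) (ne_of_gt hx0), Real.log_pow] at this
      push_cast at this
      linarith
    -- crude upper bound: c² ≤ 1536 x
    have hquart : (c x) ^ 4 / 256 ≤ Real.exp (c x) := by
      have h1 : c x / 4 ≤ Real.exp (c x / 4) := by
        linarith [Real.add_one_le_exp (c x / 4)]
      have h2 : Real.exp (c x) = (Real.exp (c x / 4)) ^ 4 := by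
        rw [← Real.exp_nat_mul]; norm_num; ring_nf
      have h3 : (c x / 4) ^ 4 ≤ (Real.exp (c x / 4)) ^ 4 :=
        pow_le_pow_left₀ (by positivity) h1 4
      calc (c x) ^ 4 / 256 = (c x / 4) ^ 4 := by ring
        _ ≤ (Real.exp (c x / 4)) ^ 4 := h3
        _ = Real.exp (c x) := h2.symm
    have hE6 : Real.exp (c x) ≤ 6 * x * (c x) ^ 2 := by
      rw [hE]; nlinarith
    have hcsqle : (c x) ^ 2 ≤ 1536 * x := by
      have h5 : (c x) ^ 4 ≤ 1536 * x * (c x) ^ 2 := by nlinarith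
      nlinarith [pow_pos hcpos 2]
    have hlog1536 : Real.log 1536 ≤ 9 := by
      rw [Real.log_le_iff_le_exp (by norm_num)]
      have h7 : (2.7:ℝ) ≤ Real.exp 1 := by
        linarith [Real.exp_one_gt_d9]
      have h8 : Real.exp 9 = (Real.exp 1) ^ 9 := by
        rw [← Real.exp_nat_mul]; norm_num
      have h9 : (2.7:ℝ) ^ 9 ≤ (Real.exp 1) ^ 9 := pow_le_pow_left₀ (by norm_num) h7 9
      rw [h8]
      nlinarith [h9]
    have hub : 2 * Real.log (c x) ≤ Real.log x + 9 := by
      have := Real.log_le_log (by positivity : (0:ℝ) < (c x) ^ 2) hcsqle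
      rw [Real.log_pow, Real.log_mul (by norm_num) (ne_of_gt hx0)] at this
      push_cast at this
      linarith
    have hlog2 : Real.log 2 ≤ 1 := by
      linarith [Real.log_two_lt_d9]
    have hlog1d : Real.log (1 + d x) ≤ 1 := by
      have := Real.log_le_log h1d (by linarith : 1 + d x ≤ 2)
      linarith
    have hc3 : c x ≤ 3 * Real.log x := by linarith
    have hlcnn : 0 ≤ Real.log (c x) := Real.log_nonneg hc1
    have hlc3 : Real.log (c x) ≤ Real.log 3 + Real.log (Real.log x) := by
      have := Real.log_le_log hcpos hc3
      rwa [Real.log_mul (by norm_num) (by linarith : Real.log x ≠ 0)] at this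
    exact ⟨hcpos, hc1, hx0, hlx, hE, hd0, hd2, hd1, h4, hub, hc3, hlcnn, hlc3⟩
  -- Limits
  have hdlim : Tendsto d atTop (nhds 0) := by
    have h2x : Tendsto (fun x : ℝ => 2 / x) atTop (nhds 0) :=
      tendsto_const_nhds.div_atTop tendsto_id
    refine tendsto_of_tendsto_of_tendsto_of_le_of_le'
      (g := fun _ : ℝ => (0:ℝ)) tendsto_const_nhds h2x ?_ ?_
    · filter_upwards [H] with x hx using hx.2.2.2.2.2.1
    · filter_upwards [H] with x hx using hx.2.2.2.2.2.2.1
  have h1dlim : Tendsto (fun x => 1 + d x) atTop (nhds 1) := by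
    simpa using tendsto_const_nhds.add hdlim
  have hlog1dlim : Tendsto (fun x => Real.log (1 + d x)) atTop (nhds 0) := by
    have := h1dlim.log one_ne_zero
    simpa using this
  have hloglog : Tendsto (fun x : ℝ => Real.log (Real.log x) / Real.log x) atTop (nhds 0) :=
    (Real.isLittleO_log_id_atTop.tendsto_div_nhds_zero).comp Real.tendsto_log_atTop
  have hlcl : Tendsto (fun x => Real.log (c x) / Real.log x) atTop (nhds 0) := by
    have hupper : Tendsto (fun x : ℝ => Real.log 3 / Real.log x +
        Real.log (Real.log x) / Real.log x) atTop (nhds 0) := by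
      simpa using (tendsto_const_nhds.div_atTop Real.tendsto_log_atTop).add hloglog
    refine tendsto_of_tendsto_of_tendsto_of_le_of_le'
      (g := fun _ : ℝ => (0:ℝ)) tendsto_const_nhds hupper ?_ ?_
    · filter_upwards [H] with x hx
      have hlx : (0:ℝ) < Real.log x := by linarith [hx.2.2.2.1]
      exact div_nonneg hx.2.2.2.2.2.2.2.2.2.2.2.1 hlx.le
    · filter_upwards [H] with x hx
      have hlx : (0:ℝ) < Real.log x := by linarith [hx.2.2.2.1]
      rw [← add_div]
      exact (div_le_div_iff_of_pos_right hlx).2 hx.2.2.2.2.2.2.2.2.2.2.2.2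
  have hratio : Tendsto (fun x => c x / Real.log x) atTop (nhds 1) := by
    have hlim : Tendsto (fun x => 1 + Real.log 2 / Real.log x +
        2 * (Real.log (c x) / Real.log x) + Real.log (1 + d x) / Real.log x)
        atTop (nhds 1) := by
      have t1 : Tendsto (fun x : ℝ => Real.log 2 / Real.log x) atTop (nhds 0) :=
        tendsto_const_nhds.div_atTop Real.tendsto_log_atTop
      have t2 : Tendsto (fun x => Real.log (1 + d x) / Real.log x) atTop (nhds 0) :=
        hlog1dlim.div_atTop Real.tendsto_log_atTop
      have := (((tendsto_const_nhds : Tendsto (fun _ : ℝ => (1:ℝ)) atTop (nhds 1)).add t1).add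
        ((hlcl.const_mul 2))).add t2
      simpa using this
    apply hlim.congr'
    filter_upwards [H] with x hx
    have hlx : (0:ℝ) < Real.log x := by linarith [hx.2.2.2.1]
    have h4 := hx.2.2.2.2.2.2.2.2.1
    field_simp
    linarith
  -- conclusion
  have hfinal : Tendsto (fun x => 2 * Real.log (c x / Real.log x) + Real.log (1 + d x))
      atTop (nhds 0) := by
    have := (hratio.log one_ne_zero).const_mul 2
    simpa using this.add hlog1dlim
  apply hfinal.congr'
  filter_upwards [H] with x hx
  have hlx : (0:ℝ) < Real.log x := by linarith [hx.2.2.2.1]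
  have h4 := hx.2.2.2.2.2.2.2.2.1
  rw [Real.log_div (ne_of_gt hx.1) (ne_of_gt hlx)]
  linarith
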